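/- Let X and Y be real normed spaces and let f : X → Y be a surjective map satisfying the phase-isometry condition. If x, y ∈ X are nonzero and satisfy ‖x+y‖ ≥ 2‖x−y‖, then f((1/2)(x+y)) equals one of (1/2)(f(x)+f(y)), −(1/2)(f(x)+f(y)), (1/2)(f(x)−f(y)), or −(1/2)(f(x)−f(y)). -/
import Mathlib


/-- The phase-isometry condition: `{‖f x + f y‖, ‖f x − f y‖} = {‖x + y‖, ‖x − y‖}` as sets. -/
def PhaseIsometry {X Y : Type*} [NormedAddCommGroup X] [NormedAddCommGroup Y]
    (f : X → Y) : Prop :=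
  ∀ x y : X, ({‖f x + f y‖, ‖f x - f y‖} : Set ℝ) = {‖x + y‖, ‖x - y‖}

namespace PhaseAux

variable {Z : Type*} [NormedAddCommGroup Z] [NormedSpace ℝ Z]

noncomputable def rho (u v : Z) : ℝ := min ‖u - v‖ ‖u + v‖

lemma rho_nonneg (u v : Z) : 0 ≤ rho u v := le_min (norm_nonneg _) (norm_nonneg _)

lemma rho_neg_left (u v : Z) : rho (-u) v = rho u v := by
  have h1 : -u - v = -(u + v) := by abel
  have h2 : -u + v = -(u - v) := by abel
  simp only [rho, h1, h2, norm_neg, min_comm]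

lemma rho_neg_right (u v : Z) : rho u (-v) = rho u v := by
  have h1 : u - -v = u + v := by abel
  have h2 : u + -v = u - v := by abel
  simp only [rho, h1, h2, min_comm]

def Wseq (p q : Z) (d : ℝ) : ℕ → Set Z
  | 0 => {w | rho w p ≤ d / 2 ∧ rho w q ≤ d / 2}
  | n + 1 => {w | w ∈ Wseq p q d n ∧ ∀ w' ∈ Wseq p q d n, rho w w' ≤ d / 2 ^ (n + 1)}

lemma Wseq_zero_of_mem (p q : Z) (d : ℝ) :
    ∀ n, ∀ w, w ∈ Wseq p q d n → w ∈ Wseq p q d 0 := by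
  intro n
  induction n with
  | zero => exact fun w h => h
  | succ n ih => exact fun w h => ih w h.1

lemma Wseq_neg_mem (p q : Z) (d : ℝ) :
    ∀ n, ∀ w, w ∈ Wseq p q d n → -w ∈ Wseq p q d n := by
  intro n
  induction n with
  | zero =>
    rintro w ⟨h1, h2⟩
    exact ⟨by rwa [rho_neg_left], by rwa [rho_neg_left]⟩
  | succ n ih =>
    rintro w ⟨h0, hB⟩
    refine ⟨ih w h0, fun w' hw' => ?_⟩
    rw [rho_neg_left]
    exact hB w' hw'

section Generic

variable (p q : Z) (d : ℝ)

lemma half_norm (v : Z) : ‖(1/2 : ℝ) • v‖ = ‖v‖ / 2 := by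
  rw [norm_smul, Real.norm_eq_abs, abs_of_nonneg (by norm_num : (0:ℝ) ≤ 1/2)]
  ring

lemma norm_sub_mid_le {w : Z} (h1 : ‖w - p‖ ≤ d / 2) (h2 : ‖w - q‖ ≤ d / 2) :
    ‖w - (1/2 : ℝ) • (p + q)‖ ≤ d / 2 := by
  have hid : w - (1/2 : ℝ) • (p + q) = (1/2 : ℝ) • ((w - p) + (w - q)) := by module
  rw [hid, half_norm]
  have := norm_add_le (w - p) (w - q)
  linarith

lemma pos_rho_eq (hs : 2 * d ≤ ‖p + q‖) {w w' : Z}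
    (h1 : ‖w - p‖ ≤ d / 2) (h2 : ‖w - q‖ ≤ d / 2)
    (h3 : ‖w' - p‖ ≤ d / 2) (h4 : ‖w' - q‖ ≤ d / 2) :
    rho w w' = ‖w - w'‖ := by
  have hw := norm_sub_mid_le p q d h1 h2
  have hw' := norm_sub_mid_le p q d h3 h4
  set m := (1/2 : ℝ) • (p + q)
  have hsub : ‖w - w'‖ ≤ d := by
    have hid : w - w' = (w - m) - (w' - m) := by abel
    have := norm_sub_le (w - m) (w' - m)
    rw [← hid] at this
    linarith
  have hadd : d ≤ ‖w + w'‖ := by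
    have hid : p + q = (w + w') - ((w - m) + (w' - m)) := by
      show p + q = (w + w') - ((w - (1/2 : ℝ) • (p + q)) + (w' - (1/2 : ℝ) • (p + q)))
      module
    have h5 : ‖p + q‖ ≤ ‖w + w'‖ + ‖(w - m) + (w' - m)‖ := by
      rw [hid]; exact norm_sub_le _ _
    have h6 := norm_add_le (w - m) (w' - m)
    linarith
  exact min_eq_left (hsub.trans hadd)

lemma sheet (hd : 0 < d) (hs : 2 * d ≤ ‖p + q‖) {w : Z} (hw : w ∈ Wseq p q d 0) :
    (‖w - p‖ ≤ d / 2 ∧ ‖w - q‖ ≤ d / 2) ∨ (‖w + p‖ ≤ d / 2 ∧ ‖w + q‖ ≤ d / 2) := by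
  obtain ⟨h1, h2⟩ := hw
  rcases min_le_iff.mp h1 with hp | hp <;> rcases min_le_iff.mp h2 with hq | hq
  · exact Or.inl ⟨hp, hq⟩
  · exfalso
    have hid : p + q = (w + q) - (w - p) := by abel
    have h5 : ‖p + q‖ ≤ ‖w + q‖ + ‖w - p‖ := by
      rw [hid]; exact norm_sub_le _ _
    linarith
  · exfalso
    have hid : p + q = (w + p) - (w - q) := by abel
    have h5 : ‖p + q‖ ≤ ‖w + p‖ + ‖w - q‖ := by
      rw [hid]; exact norm_sub_le _ _
    linarith
  · exact Or.inr ⟨hp, hq⟩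

/-- Reduce a member of `Wseq p q d n` to a "positive sheet" representative. -/
lemma pos_rep (hd : 0 < d) (hs : 2 * d ≤ ‖p + q‖) {n : ℕ} {w' : Z}
    (hw' : w' ∈ Wseq p q d n) :
    ∃ w'' ∈ Wseq p q d n, (‖w'' - p‖ ≤ d / 2 ∧ ‖w'' - q‖ ≤ d / 2) ∧
      ∀ u : Z, rho u w' = rho u w'' := by
  rcases sheet p q d hd hs (Wseq_zero_of_mem p q d n w' hw') with hpos | hneg
  · exact ⟨w', hw', hpos, fun u => rfl⟩
  · refine ⟨-w', Wseq_neg_mem p q d n w' hw', ⟨?_, ?_⟩, fun u => ?_⟩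
    · have : -w' - p = -(w' + p) := by abel
      rw [this, norm_neg]; exact hneg.1
    · have : -w' - q = -(w' + q) := by abel
      rw [this, norm_neg]; exact hneg.2
    · rw [rho_neg_right]

lemma psi_mem (hd : 0 < d) (hs : 2 * d ≤ ‖p + q‖) :
    ∀ n, ∀ w ∈ Wseq p q d n, ‖w - p‖ ≤ d / 2 → ‖w - q‖ ≤ d / 2 →
      (p + q - w) ∈ Wseq p q d n := by
  intro n
  induction n with
  | zero =>
    intro w _ h1 h2
    constructor
    · refine (min_le_left _ _).trans ?_
      have hid : p + q - w - p = -(w - q) := by abel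
      rw [hid, norm_neg]; exact h2
    · refine (min_le_left _ _).trans ?_
      have hid : p + q - w - q = -(w - p) := by abel
      rw [hid, norm_neg]; exact h1
  | succ n ih =>
    rintro w ⟨hw0, hwB⟩ h1 h2
    refine ⟨ih w hw0 h1 h2, fun w' hw' => ?_⟩
    obtain ⟨w'', hmem, ⟨hp1, hp2⟩, heq⟩ := pos_rep p q d hd hs hw'
    rw [heq]
    have hψ : (p + q - w'') ∈ Wseq p q d n := ih w'' hmem hp1 hp2
    have hb := hwB _ hψ
    have hψp1 : ‖(p + q - w'') - p‖ ≤ d / 2 := by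
      have hid : p + q - w'' - p = -(w'' - q) := by abel
      rw [hid, norm_neg]; exact hp2
    have hψp2 : ‖(p + q - w'') - q‖ ≤ d / 2 := by
      have hid : p + q - w'' - q = -(w'' - p) := by abel
      rw [hid, norm_neg]; exact hp1
    have hre : rho w (p + q - w'') = ‖w - (p + q - w'')‖ :=
      pos_rho_eq p q d hs h1 h2 hψp1 hψp2
    calc rho (p + q - w) w'' ≤ ‖(p + q - w) - w''‖ := min_le_left _ _
      _ = ‖w - (p + q - w'')‖ := by
          rw [show (p + q - w) - w'' = -(w - (p + q - w'')) from by abel, norm_neg]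
      _ = rho w (p + q - w'') := hre.symm
      _ ≤ d / 2 ^ (n + 1) := hb

lemma mid_mem (hd : 0 < d) (hpq : ‖p - q‖ = d) (hs : 2 * d ≤ ‖p + q‖) :
    ∀ n, (1/2 : ℝ) • (p + q) ∈ Wseq p q d n := by
  have hmp : ‖(1/2 : ℝ) • (p + q) - p‖ = d / 2 := by
    have hid : (1/2 : ℝ) • (p + q) - p = (1/2 : ℝ) • (q - p) := by module
    rw [hid, half_norm, norm_sub_rev, hpq]
  have hmq : ‖(1/2 : ℝ) • (p + q) - q‖ = d / 2 := by
    have hid : (1/2 : ℝ) • (p + q) - q = (1/2 : ℝ) • (p - q) := by module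
    rw [hid, half_norm, hpq]
  intro n
  induction n with
  | zero => exact ⟨(min_le_left _ _).trans hmp.le, (min_le_left _ _).trans hmq.le⟩
  | succ n ih =>
    refine ⟨ih, fun w' hw' => ?_⟩
    obtain ⟨w'', hmem, ⟨hp1, hp2⟩, heq⟩ := pos_rep p q d hd hs hw'
    rw [heq]
    have hid : (1/2 : ℝ) • (p + q) - w'' = (1/2 : ℝ) • ((p + q - w'') - w'') := by module
    have hkey : ‖(p + q - w'') - w''‖ ≤ d / 2 ^ n := by
      cases n with
      | zero =>
        have hid2 : (p + q - w'') - w'' = (2 : ℝ) • ((1/2 : ℝ) • (p + q) - w'') := by module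
        rw [hid2, norm_smul, Real.norm_eq_abs]
        have h9 := norm_sub_mid_le p q d hp1 hp2
        rw [norm_sub_rev] at h9
        rw [show |(2:ℝ)| = 2 by norm_num]
        simp only [pow_zero]
        linarith
      | succ k =>
        obtain ⟨hw''0, hw''B⟩ := hmem
        have hψ : (p + q - w'') ∈ Wseq p q d k := psi_mem p q d hd hs k w'' hw''0 hp1 hp2
        have hb := hw''B _ hψ
        have hψp1 : ‖(p + q - w'') - p‖ ≤ d / 2 := by
          have hid3 : p + q - w'' - p = -(w'' - q) := by abel
          rw [hid3, norm_neg]; exact hp2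
        have hψp2 : ‖(p + q - w'') - q‖ ≤ d / 2 := by
          have hid3 : p + q - w'' - q = -(w'' - p) := by abel
          rw [hid3, norm_neg]; exact hp1
        have hre : rho w'' (p + q - w'') = ‖w'' - (p + q - w'')‖ :=
          pos_rho_eq p q d hs hp1 hp2 hψp1 hψp2
        rw [← norm_neg, show -((p + q - w'') - w'') = w'' - (p + q - w'') from by abel,
          ← hre]
        exact hb
    calc rho ((1/2 : ℝ) • (p + q)) w'' ≤ ‖(1/2 : ℝ) • (p + q) - w''‖ := min_le_left _ _
      _ = ‖(p + q - w'') - w''‖ / 2 := by rw [hid, half_norm]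
      _ ≤ (d / 2 ^ n) / 2 := by linarith
      _ = d / 2 ^ (n + 1) := by rw [pow_succ]; ring

end Generic

section Main

variable {X Y : Type*} [NormedAddCommGroup X] [NormedSpace ℝ X]
  [NormedAddCommGroup Y] [NormedSpace ℝ Y]

lemma pair_min {f : X → Y} (hf : PhaseIsometry f) (w w' : X) :
    rho (f w) (f w') = rho w w' := by
  have h := hf w w'
  rw [Set.pair_eq_pair_iff] at h
  rcases h with ⟨h1, h2⟩ | ⟨h1, h2⟩
  · simp only [rho, h1, h2]
  · simp only [rho, h1, h2, min_comm]

lemma transport (f : X → Y) (hsurj : Function.Surjective f) (hf : PhaseIsometry f)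
    (x y : X) (b' : Y) (hb : b' = f y ∨ b' = - f y) (d : ℝ) :
    ∀ n, ∀ w, w ∈ Wseq x y d n ↔ f w ∈ Wseq (f x) b' d n := by
  have key : ∀ w : X, rho (f w) (f x) = rho w x := fun w => pair_min hf w x
  have key2 : ∀ w : X, rho (f w) b' = rho w y := fun w => by
    rcases hb with hb | hb
    · rw [hb, pair_min hf]
    · rw [hb, rho_neg_right, pair_min hf]
  intro n
  induction n with
  | zero =>
    intro w
    constructor
    · rintro ⟨h1, h2⟩
      exact ⟨by rw [key]; exact h1, by rw [key2]; exact h2⟩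
    · rintro ⟨h1, h2⟩
      exact ⟨by rw [← key w]; exact h1, by rw [← key2 w]; exact h2⟩
  | succ n ih =>
    intro w
    constructor
    · rintro ⟨h0, hB⟩
      refine ⟨(ih w).mp h0, fun v hv => ?_⟩
      obtain ⟨w', rfl⟩ := hsurj v
      rw [pair_min hf]
      exact hB w' ((ih w').mpr hv)
    · rintro ⟨h0, hB⟩
      refine ⟨(ih w).mpr h0, fun w' hw' => ?_⟩
      rw [← pair_min hf]
      exact hB (f w') ((ih w').mp hw')

lemma core (f : X → Y) (hsurj : Function.Surjective f) (hf : PhaseIsometry f)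
    (x y : X) (b' : Y) (hb : b' = f y ∨ b' = - f y)
    (hd : 0 < ‖x - y‖) (hs : 2 * ‖x - y‖ ≤ ‖x + y‖)
    (hab1 : ‖f x + b'‖ = ‖x + y‖) (hab2 : ‖f x - b'‖ = ‖x - y‖) :
    f ((1/2 : ℝ) • (x + y)) = (1/2 : ℝ) • (f x + b') ∨
    f ((1/2 : ℝ) • (x + y)) = -((1/2 : ℝ) • (f x + b')) := by
  set d := ‖x - y‖ with hd_def
  have hmX : ∀ n, (1/2 : ℝ) • (x + y) ∈ Wseq x y d n := mid_mem x y d hd rfl hs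
  have hsY : 2 * d ≤ ‖f x + b'‖ := by rw [hab1]; exact hs
  have hcY : ∀ n, (1/2 : ℝ) • (f x + b') ∈ Wseq (f x) b' d n :=
    mid_mem (f x) b' d hd hab2 hsY
  have htr := transport f hsurj hf x y b' hb d
  have hfm : ∀ n, f ((1/2 : ℝ) • (x + y)) ∈ Wseq (f x) b' d n :=
    fun n => (htr n _).mp (hmX n)
  set u := f ((1/2 : ℝ) • (x + y))
  set c := (1/2 : ℝ) • (f x + b')
  have hbound : ∀ n : ℕ, rho u c ≤ d / 2 ^ (n + 1) := fun n => (hfm (n + 1)).2 c (hcY n)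
  have h0 : rho u c ≤ 0 := by
    by_contra hcon
    push_neg at hcon
    obtain ⟨n, hn⟩ := pow_unbounded_of_one_lt (d / rho u c) (by norm_num : (1 : ℝ) < 2)
    have hpow : (0 : ℝ) < 2 ^ n := by positivity
    have hlt : d < rho u c * 2 ^ n := by
      rw [div_lt_iff₀ hcon] at hn
      linarith
    have hle : rho u c * 2 ^ n ≤ rho u c * 2 ^ (n + 1) := by
      have : (2 : ℝ) ^ n ≤ 2 ^ (n + 1) := by
        rw [pow_succ]; nlinarith
      nlinarith [hcon.le]
    have hb2 := hbound n
    rw [le_div_iff₀ (by positivity : (0:ℝ) < 2 ^ (n + 1))] at hb2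
    linarith
  rcases min_le_iff.mp h0 with hle | hle
  · exact Or.inl (sub_eq_zero.mp (norm_le_zero_iff.mp hle))
  · exact Or.inr (eq_neg_of_add_eq_zero_left (norm_le_zero_iff.mp hle))

end Main

end PhaseAux

theorem phase_isometry_midpoint_four_cases
    {X Y : Type*} [NormedAddCommGroup X] [NormedSpace ℝ X]
    [NormedAddCommGroup Y] [NormedSpace ℝ Y]
    (f : X → Y) (hsurj : Function.Surjective f) (hf : PhaseIsometry f)
    (x y : X) (hx : x ≠ 0) (hy : y ≠ 0) (h : ‖x + y‖ ≥ 2 * ‖x - y‖) :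
    f (((1 : ℝ) / 2) • (x + y)) = ((1 : ℝ) / 2) • (f x + f y) ∨
    f (((1 : ℝ) / 2) • (x + y)) = -(((1 : ℝ) / 2) • (f x + f y)) ∨
    f (((1 : ℝ) / 2) • (x + y)) = ((1 : ℝ) / 2) • (f x - f y) ∨
    f (((1 : ℝ) / 2) • (x + y)) = -(((1 : ℝ) / 2) • (f x - f y)) := by
  rcases (norm_nonneg (x - y)).eq_or_lt with hzero | hd
  · -- degenerate case x = y
    have hxy : x = y := norm_sub_eq_zero_iff.mp hzero.symm
    subst hxy
    left
    have h1 : ((1 : ℝ) / 2) • (x + x) = x := by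
      rw [← two_smul ℝ x, smul_smul]
      norm_num
    have h2 : ((1 : ℝ) / 2) • (f x + f x) = f x := by
      rw [← two_smul ℝ (f x), smul_smul]
      norm_num
    rw [h1, h2]
  · have hpair := hf x y
    rw [Set.pair_eq_pair_iff] at hpair
    rcases hpair with ⟨h1, h2⟩ | ⟨h1, h2⟩
    · rcases PhaseAux.core f hsurj hf x y (f y) (Or.inl rfl) hd h h1 h2 with hc | hc
      · exact Or.inl hc
      · exact Or.inr (Or.inl hc)
    · have hab1 : ‖f x + -f y‖ = ‖x + y‖ := by rw [← sub_eq_add_neg]; exact h2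
      have hab2 : ‖f x - -f y‖ = ‖x - y‖ := by rw [sub_neg_eq_add]; exact h1
      rcases PhaseAux.core f hsurj hf x y (-f y) (Or.inr rfl) hd h hab1 hab2 with hc | hc
      · right; right; left
        rw [hc, ← sub_eq_add_neg]
      · right; right; right
        rw [hc, ← sub_eq_add_neg]
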